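/- Let p ≥ 1 be a real number and set k_p = ⌊(p+1)/2⌋. Then for all nonnegative reals x, y, one has Σ_{k=0}^{k_p - 1} (Γ(p+1)/(Γ(k+1)Γ(p+1−k))) (x^k y^{p−k} + x^{p−k} y^k) ≤ (x+y)^p ≤ Σ_{k=0}^{k_p} (Γ(p+1)/(Γ(k+1)Γ(p+1−k))) (x^k y^{p−k} + x^{p−k} y^k). -/

import Mathlib

open Finset Real

noncomputable def rc (q : ℝ) : ℕ → ℝ
  | 0 => 1
  | (k+1) => rc q k * (q - k) / (k + 1)

lemma rc_zero (q : ℝ) : rc q 0 = 1 := rfl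
lemma rc_succ (q : ℝ) (k : ℕ) : rc q (k+1) = rc q k * (q - k) / (k + 1) := rfl

lemma rc_succ_mul (q : ℝ) (k : ℕ) : ((k:ℝ)+1) * rc q (k+1) = q * rc (q-1) k := by
  induction k generalizing q with
  | zero => simp [rc]
  | succ k ih =>
    rw [rc_succ q (k+1), rc_succ (q-1) k]
    have h := ih q
    push_cast
    field_simp
    linear_combination (q - 1 - (k:ℝ)) * h

lemma rc_mul_sub (q : ℝ) (k : ℕ) : rc q k * (q - k) = q * rc (q-1) k := by
  rw [← rc_succ_mul]
  rw [rc_succ]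
  field_simp

lemma rc_nonneg {q : ℝ} {k : ℕ} (h : (k:ℝ) - 1 ≤ q) : 0 ≤ rc q k := by
  induction k with
  | zero => norm_num [rc]
  | succ k ih =>
    rw [rc_succ]
    push_cast at h
    have h1 : 0 ≤ rc q k := ih (by linarith)
    have h2 : 0 ≤ q - k := by linarith
    positivity

lemma rc_eq_gamma {q : ℝ} (hq : 0 ≤ q) {k : ℕ} (hk : (k:ℝ) ≤ q) :
    Real.Gamma (q + 1) / (Real.Gamma ((k:ℝ) + 1) * Real.Gamma (q + 1 - k)) = rc q k := by
  induction k with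
  | zero =>
    simp only [Nat.cast_zero, zero_add, sub_zero, Real.Gamma_one, one_mul, rc_zero]
    exact div_self (Real.Gamma_pos_of_pos (by linarith)).ne'
  | succ k ih =>
    push_cast at hk
    have hk' : (k:ℝ) ≤ q := by linarith
    have hqk : 0 < q - k := by linarith
    have h1 : Real.Gamma (q + 1 - k) = (q - k) * Real.Gamma (q - k) := by
      have : q + 1 - k = (q - k) + 1 := by ring
      rw [this, Real.Gamma_add_one hqk.ne']
    have h2 : Real.Gamma ((k:ℝ) + 1 + 1) = ((k:ℝ) + 1) * Real.Gamma ((k:ℝ) + 1) := by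
      rw [Real.Gamma_add_one (by positivity)]
    have h3 : q + 1 - ((k:ℝ)+1) = q - k := by ring
    rw [show ((k:ℝ)+1) = ((k:ℝ)+1) from rfl] at *
    have hG1 : Real.Gamma ((k:ℝ)+1) ≠ 0 := (Real.Gamma_pos_of_pos (by positivity)).ne'
    have hG2 : Real.Gamma (q - k) ≠ 0 := (Real.Gamma_pos_of_pos hqk).ne'
    have hG3 : Real.Gamma (q + 1 - k) ≠ 0 := by rw [h1]; exact mul_ne_zero hqk.ne' hG2
    rw [rc_succ, ← ih hk']
    push_cast
    rw [h3, h2]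
    field_simp
    rw [h1]

noncomputable def SA (a : ℕ) (q t : ℝ) : ℝ := ∑ k ∈ range a, rc q k * t ^ (k:ℝ)
noncomputable def SB (b : ℕ) (q t : ℝ) : ℝ := ∑ k ∈ range b, rc q k * t ^ (q - (k:ℝ))
noncomputable def G (a b : ℕ) (q t : ℝ) : ℝ := (1+t)^q - SA a q t - SB b q t

lemma continuous_SA (a : ℕ) (q : ℝ) : Continuous (SA a q) := by
  unfold SA
  exact continuous_finset_sum _ fun k _ =>
    continuous_const.mul (Real.continuous_rpow_const (Nat.cast_nonneg k))

lemma continuous_SB {b : ℕ} {q : ℝ} (h : (b:ℝ) - 1 ≤ q) : Continuous (SB b q) := by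
  unfold SB
  refine continuous_finset_sum _ fun k hk => ?_
  have hk' : (k:ℝ) ≤ (b:ℝ) - 1 := by
    have := Finset.mem_range.1 hk
    have : (k:ℝ) + 1 ≤ (b:ℝ) := by exact_mod_cast this
    linarith
  exact continuous_const.mul (Real.continuous_rpow_const (by linarith))

lemma hasDerivAt_base {q t : ℝ} (ht : 0 < t) :
    HasDerivAt (fun t : ℝ => (1+t)^q) (q * (1+t)^(q-1)) t := by
  have h : HasDerivAt (fun t : ℝ => 1+t) 1 t := (hasDerivAt_id t).const_add 1
  have := h.rpow_const (p := q) (Or.inl (by linarith))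
  simpa using this

lemma hasDerivAt_SA {a : ℕ} {q t : ℝ} (ht : t ≠ 0) :
    HasDerivAt (SA (a+1) q) (q * SA a (q-1) t) t := by
  have h : ∀ k ∈ range (a+1), HasDerivAt (fun t : ℝ => rc q k * t ^ (k:ℝ))
      (rc q k * ((k:ℝ) * t ^ ((k:ℝ) - 1))) t := fun k _ =>
    (Real.hasDerivAt_rpow_const (Or.inl ht)).const_mul _
  have hsum := HasDerivAt.fun_sum h
  have heq : ∑ k ∈ range (a+1), rc q k * ((k:ℝ) * t ^ ((k:ℝ) - 1)) = q * SA a (q-1) t := by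
    rw [Finset.sum_range_succ']
    simp only [Nat.cast_zero, rc_zero]
    rw [SA, Finset.mul_sum]
    norm_num
    refine Finset.sum_congr rfl fun k _ => ?_
    linear_combination t ^ k * rc_succ_mul q k
  rw [← heq]
  exact hsum

lemma hasDerivAt_SB {b : ℕ} {q t : ℝ} (ht : t ≠ 0) :
    HasDerivAt (SB b q) (q * SB b (q-1) t) t := by
  have h : ∀ k ∈ range b, HasDerivAt (fun t : ℝ => rc q k * t ^ (q - (k:ℝ)))
      (rc q k * ((q - (k:ℝ)) * t ^ (q - (k:ℝ) - 1))) t := fun k _ =>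
    (Real.hasDerivAt_rpow_const (Or.inl ht)).const_mul _
  have hsum := HasDerivAt.fun_sum h
  have heq : ∑ k ∈ range b, rc q k * ((q - (k:ℝ)) * t ^ (q - (k:ℝ) - 1)) = q * SB b (q-1) t := by
    rw [SB, Finset.mul_sum]
    refine Finset.sum_congr rfl fun k _ => ?_
    have h1 : q - (k:ℝ) - 1 = (q - 1) - (k:ℝ) := by ring
    rw [h1, ← mul_assoc, rc_mul_sub, mul_assoc]
  rw [← heq]
  exact hsum

lemma hasDerivAt_G_succ {a b : ℕ} {q t : ℝ} (ht : 0 < t) :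
    HasDerivAt (G (a+1) b q) (q * G a b (q-1) t) t := by
  have h := ((hasDerivAt_base (q := q) ht).sub (hasDerivAt_SA (a := a) (q := q) ht.ne')).sub
    (hasDerivAt_SB (b := b) (q := q) ht.ne')
  have : q * (1+t)^(q-1) - q * SA a (q-1) t - q * SB b (q-1) t = q * G a b (q-1) t := by
    rw [G]; ring
  rw [← this]
  exact h

lemma hasDerivAt_G_zero {b : ℕ} {q t : ℝ} (ht : 0 < t) :
    HasDerivAt (G 0 b q) (q * G 0 b (q-1) t) t := by
  have hSA : SA 0 = fun (q t : ℝ) => (0:ℝ) := by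
    funext q t; simp [SA]
  have h := (hasDerivAt_base (q := q) ht).sub (hasDerivAt_SB (b := b) (q := q) ht.ne')
  have hG : G 0 b q = fun t => (1+t)^q - SB b q t := by
    funext t; rw [G]; simp [SA]
  have : q * (1+t)^(q-1) - q * SB b (q-1) t = q * G 0 b (q-1) t := by
    rw [G]; simp [SA]; ring
  rw [hG, ← this]
  exact h

lemma cont_base {q : ℝ} (hq : 0 ≤ q) : Continuous fun t : ℝ => (1+t)^q :=
  (continuous_const.add continuous_id).rpow_const (fun _ => Or.inr hq)

lemma SA_zero_succ (a : ℕ) (q : ℝ) : SA (a+1) q 0 = 1 := by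
  rw [SA, Finset.sum_range_succ']
  have h : ∀ k ∈ range a, rc q (k+1) * (0:ℝ) ^ (((k:ℕ)+1 : ℕ):ℝ) = 0 := by
    intro k _
    rw [Real.zero_rpow (by positivity), mul_zero]
  rw [Finset.sum_congr rfl h]
  simp [rc_zero]

lemma SA_one (q t : ℝ) : SA 1 q t = 1 := by
  simp [SA, rc_zero]

lemma SB_zero_nonneg {b : ℕ} {q : ℝ} (h : (b:ℝ) - 2 ≤ q) : 0 ≤ SB b q 0 := by
  rw [SB]
  refine Finset.sum_nonneg fun k hk => ?_
  have hk' : (k:ℝ) ≤ (b:ℝ) - 1 := by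
    have := Finset.mem_range.1 hk
    have : (k:ℝ) + 1 ≤ (b:ℝ) := by exact_mod_cast this
    linarith
  exact mul_nonneg (rc_nonneg (by linarith)) (Real.rpow_nonneg le_rfl _)

lemma SB_zero_eq {b : ℕ} {q : ℝ} (h : (b:ℝ) - 1 < q) : SB b q 0 = 0 := by
  rw [SB]
  refine Finset.sum_eq_zero fun k hk => ?_
  have hk' : (k:ℝ) ≤ (b:ℝ) - 1 := by
    have := Finset.mem_range.1 hk
    have : (k:ℝ) + 1 ≤ (b:ℝ) := by exact_mod_cast this
    linarith
  rw [Real.zero_rpow (by linarith : q - (k:ℝ) ≠ 0), mul_zero]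

lemma nonneg_on_Icc {F F' : ℝ → ℝ} {B : ℝ}
    (hc : ContinuousOn F (Set.Icc 0 B))
    (hd : ∀ t ∈ Set.Ioo (0:ℝ) B, HasDerivAt F (F' t) t)
    (h0 : 0 ≤ F 0) (hpos : ∀ t ∈ Set.Ioo (0:ℝ) B, 0 ≤ F' t) :
    ∀ t ∈ Set.Icc (0:ℝ) B, 0 ≤ F t := by
  intro t ht
  have hmono : MonotoneOn F (Set.Icc 0 B) := by
    refine monotoneOn_of_deriv_nonneg (convex_Icc 0 B) hc ?_ ?_
    · rw [interior_Icc]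
      exact fun x hx => ((hd x hx).differentiableAt).differentiableWithinAt
    · rw [interior_Icc]
      intro x hx
      rw [(hd x hx).deriv]
      exact hpos x hx
  have h0B : (0:ℝ) ∈ Set.Icc (0:ℝ) B := ⟨le_rfl, ht.1.trans ht.2⟩
  exact h0.trans (hmono h0B ht ht.1)

lemma nonpos_on_Icc {F F' : ℝ → ℝ} {B : ℝ}
    (hc : ContinuousOn F (Set.Icc 0 B))
    (hd : ∀ t ∈ Set.Ioo (0:ℝ) B, HasDerivAt F (F' t) t)
    (h0 : F 0 ≤ 0) (hneg : ∀ t ∈ Set.Ioo (0:ℝ) B, F' t ≤ 0) :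
    ∀ t ∈ Set.Icc (0:ℝ) B, F t ≤ 0 := by
  intro t ht
  have hmono : AntitoneOn F (Set.Icc 0 B) := by
    refine antitoneOn_of_deriv_nonpos (convex_Icc 0 B) hc ?_ ?_
    · rw [interior_Icc]
      exact fun x hx => ((hd x hx).differentiableAt).differentiableWithinAt
    · rw [interior_Icc]
      intro x hx
      rw [(hd x hx).deriv]
      exact hneg x hx
  have h0B : (0:ℝ) ∈ Set.Icc (0:ℝ) B := ⟨le_rfl, ht.1.trans ht.2⟩
  exact (hmono h0B ht ht.1).trans h0

lemma lemA : ∀ (K : ℕ) (q : ℝ), (K:ℝ) ≤ q → ∀ s : ℝ, 0 ≤ s → SA (K+1) q s ≤ (1+s)^q := by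
  intro K
  induction K with
  | zero =>
    intro q hq s hs
    rw [SA_one]
    calc (1:ℝ) = 1 ^ q := (Real.one_rpow q).symm
    _ ≤ (1+s)^q := Real.rpow_le_rpow zero_le_one (by linarith) (by exact_mod_cast hq)
  | succ K ih =>
    intro q hq s hs
    have hq0 : (0:ℝ) ≤ q := le_trans (by positivity) hq
    have hK : (K:ℝ) + 1 ≤ q := by push_cast at hq; linarith
    set F : ℝ → ℝ := fun s => (1+s)^q - SA (K+2) q s with hF
    have key : ∀ u ∈ Set.Icc (0:ℝ) s, 0 ≤ F u := by
      refine nonneg_on_Icc (F' := fun t => q * ((1+t)^(q-1) - SA (K+1) (q-1) t)) ?_ ?_ ?_ ?_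
      · exact ((cont_base hq0).sub (continuous_SA _ _)).continuousOn
      · intro t ht
        have h := (hasDerivAt_base (q := q) ht.1).sub (hasDerivAt_SA (a := K+1) (q := q) ht.1.ne')
        have : q * (1+t)^(q-1) - q * SA (K+1) (q-1) t
            = q * ((1+t)^(q-1) - SA (K+1) (q-1) t) := by ring
        rw [this] at h
        exact h
      · rw [hF]
        simp only [SA_zero_succ]
        rw [show (1:ℝ) + 0 = 1 by ring, Real.one_rpow]
        norm_num
      · intro t ht
        refine mul_nonneg hq0 (sub_nonneg.2 (ih (q-1) (by linarith) t ht.1.le))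
    have h2 : 0 ≤ (1 + s) ^ q - SA (K+2) q s := key s ⟨hs, le_rfl⟩
    have h3 : SA (K+1+1) q s = SA (K+2) q s := by norm_num
    linarith

lemma lemB : ∀ (K : ℕ) (q : ℝ), (K:ℝ) - 1 ≤ q → q ≤ (K:ℝ) → ∀ s : ℝ, 0 ≤ s →
    (1+s)^q ≤ SA (K+1) q s := by
  intro K
  induction K with
  | zero =>
    intro q hq1 hq2 s hs
    rw [SA_one]
    exact Real.rpow_le_one_of_one_le_of_nonpos (by linarith) (by exact_mod_cast hq2)
  | succ K ih =>
    intro q hq1 hq2 s hs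
    have hq0 : (0:ℝ) ≤ q := by push_cast at hq1; linarith
    set F : ℝ → ℝ := fun s => SA (K+2) q s - (1+s)^q with hF
    have key : ∀ u ∈ Set.Icc (0:ℝ) s, 0 ≤ F u := by
      refine nonneg_on_Icc (F' := fun t => q * (SA (K+1) (q-1) t - (1+t)^(q-1))) ?_ ?_ ?_ ?_
      · exact ((continuous_SA _ _).sub (cont_base hq0)).continuousOn
      · intro t ht
        have h := (hasDerivAt_SA (a := K+1) (q := q) ht.1.ne').sub (hasDerivAt_base (q := q) ht.1)
        have : q * SA (K+1) (q-1) t - q * (1+t)^(q-1)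
            = q * (SA (K+1) (q-1) t - (1+t)^(q-1)) := by ring
        rw [this] at h
        exact h
      · rw [hF]
        simp only [SA_zero_succ]
        rw [show (1:ℝ) + 0 = 1 by ring, Real.one_rpow]
        norm_num
      · intro t ht
        refine mul_nonneg hq0 (sub_nonneg.2 ?_)
        push_cast at hq1 hq2
        exact ih (q-1) (by linarith) (by linarith) t ht.1.le
    have h2 : 0 ≤ SA (K+2) q s - (1 + s) ^ q := key s ⟨hs, le_rfl⟩
    have h3 : SA (K+1+1) q s = SA (K+2) q s := by norm_num
    linarith

lemma SB_subst {b : ℕ} {q t : ℝ} (ht : 0 < t) : SB b q t = t^q * SA b q t⁻¹ := by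
  rw [SB, SA, Finset.mul_sum]
  refine Finset.sum_congr rfl fun k _ => ?_
  rw [Real.rpow_sub ht, Real.inv_rpow ht.le, div_eq_mul_inv]
  ring

lemma base_subst {q t : ℝ} (ht : 0 < t) : (1+t)^q = t^q * (1+t⁻¹)^q := by
  have h1 : (1:ℝ) + t = t * (1 + t⁻¹) := by field_simp; ring
  rw [h1, Real.mul_rpow ht.le (by positivity)]

lemma terminal_L {b : ℕ} {q t : ℝ} (hb : 1 ≤ b) (hq : (b:ℝ) - 1 ≤ q) (ht : 0 < t) :
    SB b q t ≤ (1+t)^q := by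
  obtain ⟨K, rfl⟩ := Nat.exists_eq_add_of_le hb
  rw [SB_subst ht, base_subst ht]
  have hK : (K:ℝ) ≤ q := by push_cast at hq; linarith
  have h := lemA K q hK t⁻¹ (by positivity)
  have ht' : (0:ℝ) < t^q := Real.rpow_pos_of_pos ht q
  have hKb : 1 + K = K + 1 := by omega
  rw [hKb]
  nlinarith [h, ht']

lemma terminal_U {b : ℕ} {q t : ℝ} (hb : 1 ≤ b) (hq1 : (b:ℝ) - 2 ≤ q) (hq2 : q ≤ (b:ℝ) - 1)
    (ht : 0 < t) : (1+t)^q ≤ SB b q t := by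
  obtain ⟨K, rfl⟩ := Nat.exists_eq_add_of_le hb
  rw [SB_subst ht, base_subst ht]
  have h := lemB K q (by push_cast at hq1 ⊢; linarith) (by push_cast at hq2 ⊢; linarith)
    t⁻¹ (by positivity)
  have ht' : (0:ℝ) < t^q := Real.rpow_pos_of_pos ht q
  have hKb : 1 + K = K + 1 := by omega
  rw [hKb]
  nlinarith [h, ht']

lemma G_zero_eq {b : ℕ} {q t : ℝ} : G 0 b q t = (1+t)^q - SB b q t := by
  rw [G]; simp [SA]

lemma lemLower {b : ℕ} (hb : 1 ≤ b) : ∀ (a : ℕ) (q : ℝ), (a:ℝ) + b - 1 ≤ q →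
    ∀ t : ℝ, 0 < t → t ≤ 1 → 0 ≤ G a b q t := by
  intro a
  induction a with
  | zero =>
    intro q hq t ht ht1
    rw [G_zero_eq]
    have := terminal_L (q := q) (t := t) hb (by push_cast at hq; linarith) ht
    linarith
  | succ a ih =>
    intro q hq t ht ht1
    push_cast at hq
    have hbq : (b:ℝ) - 1 < q := by
      have : (1:ℝ) ≤ (b:ℝ) := by exact_mod_cast hb
      linarith
    have hq0 : (0:ℝ) ≤ q := by
      have : (1:ℝ) ≤ (b:ℝ) := by exact_mod_cast hb
      linarith
    refine nonneg_on_Icc (F := G (a+1) b q) (F' := fun t => q * G a b (q-1) t)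
      ?_ ?_ ?_ ?_ t ⟨ht.le, ht1⟩
    · refine (((cont_base hq0).sub (continuous_SA _ _)).sub (continuous_SB ?_)).continuousOn
      linarith
    · exact fun u hu => hasDerivAt_G_succ hu.1
    · rw [G, SA_zero_succ, SB_zero_eq hbq]
      norm_num
    · intro u hu
      exact mul_nonneg hq0 (ih (q-1) (by linarith) u hu.1 hu.2.le)

lemma lemU1 {b : ℕ} (hb : 1 ≤ b) : ∀ (a : ℕ) (q : ℝ), (a:ℝ) + b - 2 ≤ q → q ≤ (a:ℝ) + b - 1 →
    ∀ t : ℝ, 0 < t → t ≤ 1 → G a b q t ≤ 0 := by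
  intro a
  induction a with
  | zero =>
    intro q hq1 hq2 t ht ht1
    rw [G_zero_eq]
    have := terminal_U (q := q) (t := t) hb (by push_cast at hq1; linarith) (by push_cast at hq2; linarith) ht
    linarith
  | succ a ih =>
    intro q hq1 hq2 t ht ht1
    push_cast at hq1 hq2
    have hb' : (1:ℝ) ≤ (b:ℝ) := by exact_mod_cast hb
    have hq0 : (0:ℝ) ≤ q := by linarith
    refine nonpos_on_Icc (F := G (a+1) b q) (F' := fun t => q * G a b (q-1) t)
      ?_ ?_ ?_ ?_ t ⟨ht.le, ht1⟩
    · refine (((cont_base hq0).sub (continuous_SA _ _)).sub (continuous_SB ?_)).continuousOn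
      linarith
    · exact fun u hu => hasDerivAt_G_succ hu.1
    · rw [G, SA_zero_succ]
      have := SB_zero_nonneg (b := b) (q := q) (by linarith)
      rw [show (1:ℝ) + 0 = 1 by ring, Real.one_rpow]
      linarith
    · intro u hu
      exact mul_nonpos_of_nonneg_of_nonpos hq0
        (ih (q-1) (by linarith) (by linarith) u hu.1 hu.2.le)

lemma lemU2 {b : ℕ} (hb : 1 ≤ b) : ∀ (a : ℕ) (q : ℝ), (a:ℝ) + b - 2 ≤ q → q ≤ (a:ℝ) + b - 1 →
    ∀ t : ℝ, 0 < t → t ≤ 1 → G (a+1) b q t ≤ 0 := by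
  intro a
  induction a with
  | zero =>
    intro q hq1 hq2 t ht ht1
    have h0 := terminal_U (q := q) (t := t) hb (by push_cast at hq1; linarith) (by push_cast at hq2; linarith) ht
    rw [G, SA_one]
    linarith
  | succ a ih =>
    intro q hq1 hq2 t ht ht1
    push_cast at hq1 hq2
    have hb' : (1:ℝ) ≤ (b:ℝ) := by exact_mod_cast hb
    have hq0 : (0:ℝ) ≤ q := by linarith
    refine nonpos_on_Icc (F := G (a+2) b q) (F' := fun t => q * G (a+1) b (q-1) t)
      ?_ ?_ ?_ ?_ t ⟨ht.le, ht1⟩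
    · refine (((cont_base hq0).sub (continuous_SA _ _)).sub (continuous_SB ?_)).continuousOn
      linarith
    · exact fun u hu => hasDerivAt_G_succ hu.1
    · rw [G, SA_zero_succ]
      have := SB_zero_nonneg (b := b) (q := q) (by linarith)
      rw [show (1:ℝ) + 0 = 1 by ring, Real.one_rpow]
      linarith
    · intro u hu
      exact mul_nonpos_of_nonneg_of_nonpos hq0
        (ih (q-1) (by linarith) (by linarith) u hu.1 hu.2.le)

lemma main_t {p : ℝ} (m : ℕ) (hm : 1 ≤ m) (h1 : 2*(m:ℝ) - 1 ≤ p) (h2 : p < 2*(m:ℝ) + 1)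
    {t : ℝ} (ht : 0 < t) (ht1 : t ≤ 1) :
    SA m p t + SB m p t ≤ (1+t)^p ∧ (1+t)^p ≤ SA (m+1) p t + SB (m+1) p t := by
  constructor
  · have := lemLower hm m p (by push_cast; linarith) t ht ht1
    rw [G] at this; linarith
  · rcases le_or_gt p (2*(m:ℝ)) with h | h
    · have := lemU2 (b := m+1) (by omega) m p (by push_cast; linarith) (by push_cast; linarith)
        t ht ht1
      rw [G] at this; linarith
    · have := lemU1 (b := m+1) (by omega) (m+1) p (by push_cast; linarith) (by push_cast; linarith)
        t ht ht1
      rw [G] at this; linarith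

lemma bridge {y t : ℝ} (hy : 0 < y) (ht : 0 ≤ t) (p c : ℝ) :
    (t*y)^c * y^(p-c) = y^p * t^c := by
  rw [Real.mul_rpow ht hy.le, mul_assoc, ← Real.rpow_add hy, show c + (p - c) = p by ring]
  ring

lemma main_xy {p : ℝ} (hp : 1 ≤ p) (m : ℕ) (hm : 1 ≤ m) (hc1 : 2*(m:ℝ)-1 ≤ p)
    (hc2 : p < 2*(m:ℝ)+1) (hmp : (m:ℝ) ≤ p)
    {x y : ℝ} (hx : 0 ≤ x) (hy : 0 ≤ y) (hxy : x ≤ y) :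
    (∑ k ∈ range m,
        Real.Gamma (p + 1) / (Real.Gamma ((k : ℝ) + 1) * Real.Gamma (p + 1 - (k : ℝ))) *
          (x ^ (k : ℝ) * y ^ (p - (k : ℝ)) + x ^ (p - (k : ℝ)) * y ^ (k : ℝ)))
        ≤ (x + y) ^ p ∧
      (x + y) ^ p ≤
        ∑ k ∈ range (m + 1),
          Real.Gamma (p + 1) / (Real.Gamma ((k : ℝ) + 1) * Real.Gamma (p + 1 - (k : ℝ))) *
            (x ^ (k : ℝ) * y ^ (p - (k : ℝ)) + x ^ (p - (k : ℝ)) * y ^ (k : ℝ)) := by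
  have hrw : ∀ n : ℕ, n ≤ m+1 →
      (∑ k ∈ range n,
        Real.Gamma (p + 1) / (Real.Gamma ((k : ℝ) + 1) * Real.Gamma (p + 1 - (k : ℝ))) *
          (x ^ (k : ℝ) * y ^ (p - (k : ℝ)) + x ^ (p - (k : ℝ)) * y ^ (k : ℝ)))
      = ∑ k ∈ range n, rc p k *
          (x ^ (k : ℝ) * y ^ (p - (k : ℝ)) + x ^ (p - (k : ℝ)) * y ^ (k : ℝ)) := by
    intro n hn
    refine Finset.sum_congr rfl fun k hk => ?_
    have hk' : (k:ℝ) + 1 ≤ (m:ℝ) + 1 := by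
      have : k < n := Finset.mem_range.1 hk
      have : k ≤ m := by omega
      exact_mod_cast add_le_add_left (Nat.cast_le.2 this) 1
    rw [rc_eq_gamma (by linarith) (by linarith)]
  rw [hrw m (by omega), hrw (m+1) le_rfl]
  rcases hx.eq_or_lt with hx0 | hx0
  · -- x = 0
    subst hx0
    have hp0 : p ≠ 0 := by linarith
    have hz : ∀ k ∈ range m, k ≠ 0 →
        rc p k * ((0:ℝ) ^ (k:ℝ) * y ^ (p - (k:ℝ)) + (0:ℝ) ^ (p - (k:ℝ)) * y ^ (k:ℝ)) = 0 := by
      intro k hk hk0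
      have hk1 : (k:ℝ) ≠ 0 := Nat.cast_ne_zero.2 hk0
      have hklt : (k:ℝ) < p := by
        have h1 : k < m := Finset.mem_range.1 hk
        have h2 : (k:ℝ) < (m:ℝ) := by exact_mod_cast h1
        linarith
      rw [Real.zero_rpow hk1, Real.zero_rpow (by linarith : p - (k:ℝ) ≠ 0)]
      ring
    have h0 : rc p 0 * ((0:ℝ) ^ ((0:ℕ):ℝ) * y ^ (p - ((0:ℕ):ℝ)) +
        (0:ℝ) ^ (p - ((0:ℕ):ℝ)) * y ^ ((0:ℕ):ℝ)) = y ^ p := by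
      simp [rc_zero, Real.zero_rpow hp0]
    constructor
    · rw [Finset.sum_eq_single_of_mem 0 (Finset.mem_range.2 (by omega)) hz]
      simp [rc_zero, Real.zero_rpow hp0]
    · have hnn : ∀ k ∈ range (m+1), 0 ≤ rc p k *
          ((0:ℝ) ^ (k:ℝ) * y ^ (p - (k:ℝ)) + (0:ℝ) ^ (p - (k:ℝ)) * y ^ (k:ℝ)) := by
        intro k hk
        have hkm : k ≤ m := by
          have := Finset.mem_range.1 hk
          omega
        have hkm' : (k:ℝ) ≤ (m:ℝ) := by exact_mod_cast hkm
        refine mul_nonneg (rc_nonneg (by linarith)) ?_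
        have n1 : (0:ℝ) ≤ (0:ℝ) ^ (k:ℝ) := Real.rpow_nonneg le_rfl _
        have n2 : (0:ℝ) ≤ (0:ℝ) ^ (p - (k:ℝ)) := Real.rpow_nonneg le_rfl _
        have n3 : (0:ℝ) ≤ y ^ (p - (k:ℝ)) := Real.rpow_nonneg hy _
        have n4 : (0:ℝ) ≤ y ^ (k:ℝ) := Real.rpow_nonneg hy _
        nlinarith
      have hle := Finset.single_le_sum hnn (Finset.mem_range.2 (by omega : 0 < m+1))
      rw [zero_add, ← h0]
      exact hle
  · -- 0 < x
    have hy0 : 0 < y := lt_of_lt_of_le hx0 hxy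
    set t := x / y with htdef
    have ht : 0 < t := div_pos hx0 hy0
    have ht1 : t ≤ 1 := (div_le_one hy0).2 hxy
    have hxt : x = t * y := by rw [htdef]; field_simp
    have hsplit : ∀ n : ℕ,
        (∑ k ∈ range n, rc p k *
          (x ^ (k : ℝ) * y ^ (p - (k : ℝ)) + x ^ (p - (k : ℝ)) * y ^ (k : ℝ)))
        = y^p * (SA n p t + SB n p t) := by
      intro n
      rw [SA, SB, mul_add, Finset.mul_sum, Finset.mul_sum, ← Finset.sum_add_distrib]
      refine Finset.sum_congr rfl fun k _ => ?_
      have e1 : x ^ (k:ℝ) * y ^ (p - (k:ℝ)) = y^p * t^(k:ℝ) := by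
        rw [hxt]; exact bridge hy0 ht.le p _
      have e2 : x ^ (p - (k:ℝ)) * y ^ (k:ℝ) = y^p * t^(p - (k:ℝ)) := by
        have hb := bridge hy0 ht.le p (p - (k:ℝ))
        rw [show p - (p - (k:ℝ)) = (k:ℝ) by ring] at hb
        rw [hxt]
        exact hb
      rw [e1, e2]
      ring
    have hadd : (x + y)^p = y^p * (1+t)^p := by
      rw [show x + y = (1+t) * y by rw [hxt]; ring, Real.mul_rpow (by linarith) hy0.le]
      ring
    obtain ⟨hL, hU⟩ := main_t m hm hc1 hc2 ht ht1
    have hyp : (0:ℝ) ≤ y^p := Real.rpow_nonneg hy0.le p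
    constructor
    · rw [hsplit m, hadd]
      exact mul_le_mul_of_nonneg_left hL hyp
    · rw [hsplit (m+1), hadd]
      exact mul_le_mul_of_nonneg_left hU hyp

theorem stmt_0 (p : ℝ) (hp : 1 ≤ p) (x y : ℝ) (hx : 0 ≤ x) (hy : 0 ≤ y) :
    (∑ k ∈ Finset.range ⌊(p + 1) / 2⌋₊,
        Real.Gamma (p + 1) / (Real.Gamma ((k : ℝ) + 1) * Real.Gamma (p + 1 - (k : ℝ))) *
          (x ^ (k : ℝ) * y ^ (p - (k : ℝ)) + x ^ (p - (k : ℝ)) * y ^ (k : ℝ)))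
        ≤ (x + y) ^ p ∧
      (x + y) ^ p ≤
        ∑ k ∈ Finset.range (⌊(p + 1) / 2⌋₊ + 1),
          Real.Gamma (p + 1) / (Real.Gamma ((k : ℝ) + 1) * Real.Gamma (p + 1 - (k : ℝ))) *
            (x ^ (k : ℝ) * y ^ (p - (k : ℝ)) + x ^ (p - (k : ℝ)) * y ^ (k : ℝ)) := by
  set m := ⌊(p + 1) / 2⌋₊ with hmdef
  have hm1 : 1 ≤ m := by
    rw [hmdef]
    refine Nat.le_floor ?_
    push_cast
    linarith
  have hmle : (m:ℝ) ≤ (p+1)/2 := Nat.floor_le (by linarith)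
  have hmlt : (p+1)/2 < (m:ℝ)+1 := Nat.lt_floor_add_one _
  have hc1 : 2*(m:ℝ) - 1 ≤ p := by linarith
  have hc2 : p < 2*(m:ℝ) + 1 := by linarith
  have hmp : (m:ℝ) ≤ p := by linarith
  rcases le_total x y with hxy | hxy
  · exact main_xy hp m hm1 hc1 hc2 hmp hx hy hxy
  · obtain ⟨h1, h2⟩ := main_xy hp m hm1 hc1 hc2 hmp hy hx hxy
    have hsym : ∀ n : ℕ,
        (∑ k ∈ range n,
          Real.Gamma (p + 1) / (Real.Gamma ((k : ℝ) + 1) * Real.Gamma (p + 1 - (k : ℝ))) *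
            (y ^ (k : ℝ) * x ^ (p - (k : ℝ)) + y ^ (p - (k : ℝ)) * x ^ (k : ℝ)))
        = ∑ k ∈ range n,
          Real.Gamma (p + 1) / (Real.Gamma ((k : ℝ) + 1) * Real.Gamma (p + 1 - (k : ℝ))) *
            (x ^ (k : ℝ) * y ^ (p - (k : ℝ)) + x ^ (p - (k : ℝ)) * y ^ (k : ℝ)) :=
      fun n => Finset.sum_congr rfl fun k _ => by ring
    rw [hsym m, add_comm y x] at h1
    rw [hsym (m+1), add_comm y x] at h2
    exact ⟨h1, h2⟩
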